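/- For every r ≥ 3 and t ≥ 1, there exists a complete r-uniform r-partite hypergraph with a spanning (r+t)-coloring of its edges such that the vertex set cannot be covered by t monochromatic components. In other words, cov(r, r+t) ≥ t+1. -/
import Mathlib


open Classical

variable {V : Type*}

/-- `e` is an edge of the complete `r`-uniform `r`-partite hypergraph with
partition `part`: it meets every class in exactly one vertex. -/
def IsPartiteEdge {r : ℕ} (part : V → Fin r) (e : Finset V) : Prop :=
  ∀ i : Fin r, (e.filter fun v => part v = i).card = 1

/-- `e` is an edge of the complete `r`-uniform `(r,ℓ)`-partite hypergraph:
an `r`-set meeting every class in at most `ℓ` vertices. -/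
def IsRLEdge {r : ℕ} (part : V → Fin r) (ℓ : ℕ) (e : Finset V) : Prop :=
  e.card = r ∧ ∀ i : Fin r, (e.filter fun v => part v = i).card ≤ ℓ

/-- An edge is friendly if it meets at most one class in exactly `ℓ` vertices. -/
def Friendly {r : ℕ} (part : V → Fin r) (ℓ : ℕ) (e : Finset V) : Prop :=
  (Finset.univ.filter fun i : Fin r => (e.filter fun v => part v = i).card = ℓ).card ≤ 1

/-- `u` and `v` lie in the same monochromatic component of color `c` of the
hypergraph with edge predicate `E` and edge coloring `χ`. -/
def MonoConn {k : ℕ} (E : Finset V → Prop) (χ : Finset V → Fin k) (c : Fin k)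
    (u v : V) : Prop :=
  Relation.ReflTransGen (fun a b => ∃ e : Finset V, E e ∧ χ e = c ∧ a ∈ e ∧ b ∈ e) u v

/-- The coloring `χ` is spanning: every vertex is incident with an edge of every color. -/
def Spanning {k : ℕ} (E : Finset V → Prop) (χ : Finset V → Fin k) : Prop :=
  ∀ v : V, ∀ c : Fin k, ∃ e : Finset V, E e ∧ χ e = c ∧ v ∈ e

/-- The vertex set can be covered by at most `m` monochromatic components. -/
def CoversBy {k : ℕ} (E : Finset V → Prop) (χ : Finset V → Fin k) (m : ℕ) : Prop :=
  ∃ f : Fin m → Fin k × V, ∀ v : V, ∃ i : Fin m, MonoConn E χ (f i).1 (f i).2 v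

/-- Hamming distance of the component vectors of two vertices: the number of
colors `c` for which they lie in different monochromatic components of color `c`. -/
noncomputable def HamDist {k : ℕ} (E : Finset V → Prop) (χ : Finset V → Fin k)
    (v w : V) : ℕ :=
  (Finset.univ.filter fun c : Fin k => ¬ MonoConn E χ c v w).card

namespace Stmt3Aux

open Finset

/-- Vertex type: class index, a label function, and a tag used for tie-breaking. -/
abbrev VV (r t : ℕ) : Type := Fin r × (Fin (r + t) → Fin (t + 2)) × ZMod (r + t)

/-- Support of a label function. -/
def suppF {r t : ℕ} (ψ : Fin (r + t) → Fin (t + 2)) : Finset (Fin (r + t)) :=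
  Finset.univ.filter fun c => ψ c ≠ 0

/-- Support budget of class `i` : `t` for class `0`, `1` for the others. -/
def sb {r : ℕ} (t : ℕ) (i : Fin r) : ℕ := if (i : ℕ) = 0 then t else 1

/-- Effective label of a vertex: its label if within budget, else the zero function. -/
noncomputable def iot {r t : ℕ} (v : VV r t) : Fin (r + t) → Fin (t + 2) :=
  if (suppF v.2.1).card ≤ sb t v.1 then v.2.1 else fun _ => 0

/-- Colors on which all vertices of `e` have equal effective labels. -/
noncomputable def AgreeF {r t : ℕ} (e : Finset (VV r t)) : Finset (Fin (r + t)) :=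
  Finset.univ.filter fun c => ∀ v ∈ e, ∀ w ∈ e, iot v c = iot w c

/-- Target color from the tags. -/
noncomputable def tgtF {r t : ℕ} [NeZero (r + t)] (e : Finset (VV r t)) : Fin (r + t) :=
  ⟨(∑ v ∈ e, v.2.2).val, ZMod.val_lt _⟩

/-- The coloring. -/
noncomputable def chiF {r t : ℕ} [NeZero (r + t)] (e : Finset (VV r t)) : Fin (r + t) :=
  if h : (AgreeF e).Nonempty then
    (if tgtF e ∈ AgreeF e then tgtF e else (AgreeF e).min' h)
  else tgtF e

lemma mem_agreeF {r t : ℕ} {e : Finset (VV r t)} {c : Fin (r + t)} :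
    c ∈ AgreeF e ↔ ∀ v ∈ e, ∀ w ∈ e, iot v c = iot w c := by
  rw [AgreeF, Finset.mem_filter]
  simp only [Finset.mem_univ, true_and]

lemma suppF_iot_le {r t : ℕ} (v : VV r t) : (suppF (iot v)).card ≤ sb t v.1 := by
  unfold iot
  split
  · assumption
  · have : suppF (r := r) (t := t) (fun _ => 0) = ∅ := by
      simp [suppF]
    rw [this]
    simp

lemma agree_nonempty {r t : ℕ} (hr : 3 ≤ r) {e : Finset (VV r t)}
    (hE : IsPartiteEdge (Prod.fst : VV r t → Fin r) e) : (AgreeF e).Nonempty := by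
  classical
  set Su := e.biUnion (fun v => suppF (iot v)) with hSu
  have h1 : Su.card ≤ ∑ v ∈ e, (suppF (iot v)).card := Finset.card_biUnion_le
  have h2 : ∑ v ∈ e, (suppF (iot v)).card ≤ ∑ v ∈ e, sb t v.1 :=
    Finset.sum_le_sum (fun v _ => suppF_iot_le v)
  have h3 : ∑ v ∈ e, sb t v.1
      = ∑ i : Fin r, ∑ v ∈ e.filter (fun v => v.1 = i), sb t v.1 :=
    (Finset.sum_fiberwise_of_maps_to (fun v _ => Finset.mem_univ v.1) _).symm
  have h4 : ∀ i : Fin r, ∑ v ∈ e.filter (fun v => v.1 = i), sb t v.1 = sb t i := by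
    intro i
    obtain ⟨a, ha⟩ := Finset.card_eq_one.1 (hE i)
    rw [ha, Finset.sum_singleton]
    have hmem : a ∈ e.filter (fun v => v.1 = i) := ha ▸ Finset.mem_singleton_self a
    rw [(Finset.mem_filter.1 hmem).2]
  have h0r : (0 : ℕ) < r := by omega
  have h5 : ∑ i : Fin r, sb t i = t + (r - 1) := by
    have hmem : (⟨0, h0r⟩ : Fin r) ∈ (Finset.univ : Finset (Fin r)) := Finset.mem_univ _
    rw [← Finset.add_sum_erase _ _ hmem]
    have hs0 : sb t (⟨0, h0r⟩ : Fin r) = t := by simp [sb]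
    have hs1 : ∀ i ∈ (Finset.univ : Finset (Fin r)).erase ⟨0, h0r⟩, sb t i = 1 := by
      intro i hi
      have hne : i ≠ ⟨0, h0r⟩ := (Finset.mem_erase.1 hi).1
      have : (i : ℕ) ≠ 0 := by
        intro hc; exact hne (Fin.ext hc)
      simp [sb, this]
    rw [hs0, Finset.sum_congr rfl hs1]
    rw [Finset.sum_const, smul_eq_mul, mul_one, Finset.card_erase_of_mem hmem]
    simp
  have hlt : Su.card < r + t := by
    have := h1.trans (h2.trans_eq (h3.trans ((Finset.sum_congr rfl fun i _ => h4 i).trans h5)))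
    omega
  have hne : ((Finset.univ : Finset (Fin (r + t))) \ Su).Nonempty := by
    apply Finset.card_pos.1
    rw [Finset.card_sdiff_of_subset (Finset.subset_univ _), Finset.card_univ, Fintype.card_fin]
    omega
  obtain ⟨c, hc⟩ := hne
  have hcS : c ∉ Su := (Finset.mem_sdiff.1 hc).2
  have hzero : ∀ v ∈ e, iot v c = 0 := by
    intro v hv
    by_contra hne'
    exact hcS (Finset.mem_biUnion.2 ⟨v, hv, Finset.mem_filter.2 ⟨Finset.mem_univ _, hne'⟩⟩)
  exact ⟨c, mem_agreeF.2 fun v hv w hw => (hzero v hv).trans (hzero w hw).symm⟩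

lemma chi_mem_agree {r t : ℕ} [NeZero (r + t)] {e : Finset (VV r t)}
    (h : (AgreeF e).Nonempty) : chiF e ∈ AgreeF e := by
  unfold chiF
  rw [dif_pos h]
  split_ifs with h2
  · exact h2
  · exact Finset.min'_mem _ _

lemma mono_inv {r t : ℕ} [NeZero (r + t)] (hr : 3 ≤ r) {c : Fin (r + t)} {u v : VV r t}
    (h : MonoConn (IsPartiteEdge (Prod.fst : VV r t → Fin r)) chiF c u v) :
    iot u c = iot v c := by
  induction h with
  | refl => rfl
  | tail _ hstep ih =>
    obtain ⟨e, hE, hχ, ha, hb⟩ := hstep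
    have hmem : chiF e ∈ AgreeF e := chi_mem_agree (agree_nonempty hr hE)
    rw [hχ] at hmem
    exact ih.trans ((mem_agreeF.1 hmem) _ ha _ hb)

lemma spanning_all {r t : ℕ} [NeZero (r + t)] (hr : 3 ≤ r) (ht : 1 ≤ t) :
    Spanning (V := VV r t) (IsPartiteEdge (Prod.fst : VV r t → Fin r)) chiF := by
  intro u c
  have h0r : 0 < r := by omega
  have h1r : 1 < r := by omega
  set x : Fin (t + 2) := iot u c with hx
  set j₀ : Fin r := if u.1 = ⟨0, h0r⟩ then ⟨1, h1r⟩ else ⟨0, h0r⟩ with hj₀def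
  have hj₀ : j₀ ≠ u.1 := by
    rw [hj₀def]
    split_ifs with h
    · rw [h]
      simp [Fin.ext_iff]
    · exact fun hc => h hc.symm
  set x₀ : ZMod (r + t) := ((c : ℕ) : ZMod (r + t)) - u.2.2 with hx₀
  set w : Fin r → VV r t := fun j =>
    if j = u.1 then u
    else (j, (fun c' => if c' = c then x else 0), if j = j₀ then x₀ else 0) with hw
  have hw1 : ∀ j, (w j).1 = j := by
    intro j
    rw [hw]
    dsimp only
    by_cases h : j = u.1
    · rw [if_pos h]
      exact h.symm
    · rw [if_neg h]
  have hwinj : Function.Injective w := by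
    intro a b hab
    have h2 := congrArg Prod.fst hab
    rwa [hw1, hw1] at h2
  set e : Finset (VV r t) := Finset.univ.image w with he
  have hwu : w u.1 = u := by
    rw [hw]; dsimp only; rw [if_pos rfl]
  have hue : u ∈ e := by
    rw [he]
    exact Finset.mem_image.2 ⟨u.1, Finset.mem_univ _, hwu⟩
  have hfil : ∀ i : Fin r, e.filter (fun v => Prod.fst v = i) = {w i} := by
    intro i
    ext v
    simp only [he, Finset.mem_filter, Finset.mem_image, Finset.mem_univ, true_and,
      Finset.mem_singleton]
    constructor
    · rintro ⟨⟨j, rfl⟩, hvi⟩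
      rw [hw1] at hvi
      rw [hvi]
    · rintro rfl
      exact ⟨⟨i, rfl⟩, hw1 i⟩
  have hedge : IsPartiteEdge (Prod.fst : VV r t → Fin r) e := by
    intro i
    rw [show (e.filter fun v => Prod.fst v = i) = {w i} from hfil i]
    exact Finset.card_singleton _
  have hcov : ∀ j, j ≠ u.1 → iot (w j) = fun c' => if c' = c then x else 0 := by
    intro j hj
    rw [hw]
    dsimp only
    rw [if_neg hj]
    unfold iot
    dsimp only
    rw [if_pos]
    have hsub : suppF (r := r) (t := t) (fun c' => if c' = c then x else 0) ⊆ {c} := by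
      intro c' hc'
      rcases Finset.mem_filter.1 hc' with ⟨-, hne⟩
      rw [Finset.mem_singleton]
      by_contra hcc
      exact hne (if_neg hcc)
    have hc1 := Finset.card_le_card hsub
    rw [Finset.card_singleton] at hc1
    have hsb : 1 ≤ sb t j := by
      unfold sb
      split <;> omega
    exact hc1.trans hsb
  have hagree : ∀ v ∈ e, iot v c = x := by
    intro v hv
    rw [he] at hv
    obtain ⟨j, -, rfl⟩ := Finset.mem_image.1 hv
    by_cases h : j = u.1
    · rw [hw]
      dsimp only
      rw [if_pos h]
    · rw [hcov j h]
      simp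
  have hcAg : c ∈ AgreeF e :=
    mem_agreeF.2 fun v hv w' hw' => (hagree v hv).trans (hagree w' hw').symm
  have hsum : (∑ v ∈ e, v.2.2) = ((c : ℕ) : ZMod (r + t)) := by
    rw [he, Finset.sum_image (fun a _ b _ h => hwinj h)]
    have hpt : ∀ j : Fin r, (w j).2.2
        = (if j = u.1 then u.2.2 else 0) + (if j = j₀ then x₀ else 0) := by
      intro j
      rw [hw]
      dsimp only
      by_cases h1 : j = u.1
      · rw [if_pos h1, if_pos h1, if_neg (fun hc : j = j₀ => hj₀ (hc ▸ h1))]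
        exact (add_zero _).symm
      · rw [if_neg h1, if_neg h1]
        exact (zero_add _).symm
    rw [Finset.sum_congr rfl (fun j _ => hpt j), Finset.sum_add_distrib,
      Finset.sum_ite_eq' Finset.univ u.1 (fun _ => u.2.2),
      Finset.sum_ite_eq' Finset.univ j₀ (fun _ => x₀)]
    simp only [Finset.mem_univ, if_true]
    rw [hx₀]
    ring
  have htgt : tgtF e = c := by
    apply Fin.ext
    show (∑ v ∈ e, v.2.2).val = (c : ℕ)
    rw [hsum, ZMod.val_cast_of_lt c.isLt]
  refine ⟨e, hedge, ?_, hue⟩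
  unfold chiF
  rw [dif_pos ⟨c, hcAg⟩, htgt, if_pos hcAg]

lemma no_cover {r t : ℕ} [NeZero (r + t)] (hr : 3 ≤ r) (ht : 1 ≤ t) :
    ¬ CoversBy (V := VV r t) (IsPartiteEdge (Prod.fst : VV r t → Fin r)) chiF t := by
  rintro ⟨f, hf⟩
  classical
  set bads : Fin (r + t) → Finset (Fin (t + 2)) := fun cc =>
    (Finset.univ.filter (fun m : Fin t => (f m).1 = cc)).image
      (fun m => iot ((f m).2) cc) with hbads
  have hbcard : ∀ cc, (bads cc).card ≤ t := by
    intro cc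
    calc (bads cc).card ≤ (Finset.univ.filter (fun m : Fin t => (f m).1 = cc)).card :=
          Finset.card_image_le
      _ ≤ (Finset.univ : Finset (Fin t)).card := Finset.card_filter_le _ _
      _ = t := by simp
  have hbne : ∀ cc, ((Finset.univ : Finset (Fin (t + 2))) \ bads cc).Nonempty := by
    intro cc
    apply Finset.card_pos.1
    rw [Finset.card_sdiff_of_subset (Finset.subset_univ _), Finset.card_univ, Fintype.card_fin]
    have := hbcard cc
    omega
  set ψ : Fin (r + t) → Fin (t + 2) := fun cc =>
    if (0 : Fin (t + 2)) ∈ bads cc then (Finset.univ \ bads cc).min' (hbne cc) else 0 with hψ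
  have hψnotbad : ∀ cc, ψ cc ∉ bads cc := by
    intro cc
    rw [hψ]
    dsimp only
    split_ifs with h
    · exact (Finset.mem_sdiff.1 (Finset.min'_mem _ (hbne cc))).2
    · exact h
  have hsupp : suppF (r := r) (t := t) ψ ⊆ Finset.univ.image (fun m : Fin t => (f m).1) := by
    intro cc hcc
    rcases Finset.mem_filter.1 hcc with ⟨-, hne⟩
    rw [hψ] at hne
    dsimp only at hne
    by_cases h : (0 : Fin (t + 2)) ∈ bads cc
    · rw [hbads] at h
      rcases Finset.mem_image.1 h with ⟨m, hm, -⟩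
      rcases Finset.mem_filter.1 hm with ⟨-, hm2⟩
      exact Finset.mem_image.2 ⟨m, Finset.mem_univ _, hm2⟩
    · rw [if_neg h] at hne
      exact absurd rfl hne
  have hsc : (suppF (r := r) (t := t) ψ).card ≤ t := by
    calc (suppF (r := r) (t := t) ψ).card
        ≤ (Finset.univ.image (fun m : Fin t => (f m).1)).card := Finset.card_le_card hsupp
      _ ≤ (Finset.univ : Finset (Fin t)).card := Finset.card_image_le
      _ = t := by simp
  set v₀ : VV r t := (⟨0, by omega⟩, ψ, 0) with hv₀
  have hiota : iot v₀ = ψ := by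
    unfold iot
    rw [if_pos]
    have : sb t (v₀.1) = t := by
      rw [hv₀]
      simp [sb]
    rw [this]
    exact hsc
  obtain ⟨m, hm⟩ := hf v₀
  have h1 : iot ((f m).2) ((f m).1) = iot v₀ ((f m).1) := mono_inv hr hm
  have h2 : iot ((f m).2) ((f m).1) ∈ bads ((f m).1) := by
    rw [hbads]
    exact Finset.mem_image.2 ⟨m, Finset.mem_filter.2 ⟨Finset.mem_univ _, rfl⟩, rfl⟩
  rw [h1, hiota] at h2
  exact hψnotbad _ h2

end Stmt3Aux

theorem stmt_3 (r t : ℕ) (hr : 3 ≤ r) (ht : 1 ≤ t) :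
    ∃ (V : Type) (_ : Fintype V) (part : V → Fin r) (χ : Finset V → Fin (r + t)),
      (∀ i : Fin r, ∃ v, part v = i) ∧ Spanning (IsPartiteEdge part) χ ∧
      ¬ CoversBy (IsPartiteEdge part) χ t := by
  haveI : NeZero (r + t) := ⟨by omega⟩
  refine ⟨Stmt3Aux.VV r t, inferInstance, Prod.fst, Stmt3Aux.chiF, ?_, ?_, ?_⟩
  · intro i
    exact ⟨(i, fun _ => 0, 0), rfl⟩
  · exact Stmt3Aux.spanning_all hr ht
  · exact Stmt3Aux.no_cover hr ht
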